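/- For each 1 ≤ j ≤ n, assuming A is invertible at the point considered, the partial derivative of κ (an ℝ³-valued function, A depending on θ_j through s_j = rΓ + ζ_j(θ_j)) with respect to θ_j equals A⁻¹ m_j [ζ′_j × {gΓ + Ω × (Ω × ζ_j + 2θ̇_jζ′_j) + θ̇_j²ζ″_j + u_jζ′_j} + s_j × {Ω × (Ω × ζ′_j + 2θ̇_jζ″_j) + θ̇_j²ζ‴_j + u_jζ″_j} − 2 Sym(ŝ_j ζ̂′_j) κ], where Sym(M) = (M + Mᵀ)/2, κ on the right-hand side is the value at the point, and ζ_j with its derivatives is evaluated at θ_j. -/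

import Mathlib

open Matrix Finset

/-- The hat map: `hatM w` is the `3 × 3` skew-symmetric matrix with `hatM w *ᵥ y = w ×₃ y`. -/
noncomputable def hatM (w : Fin 3 → ℝ) : Matrix (Fin 3) (Fin 3) ℝ :=
  !![0, -w 2, w 1; w 2, 0, -w 0; -w 1, w 0, 0]

/-- The inertia tensor `𝕀 = diag(d₁, d₂, d₃)`. -/
noncomputable def inertiaM (d1 d2 d3 : ℝ) : Matrix (Fin 3) (Fin 3) ℝ :=
  Matrix.diagonal ![d1, d2, d3]

/-- `A = Σ_{i=0}^n mᵢ ŝᵢ² − 𝕀`, where `sᵢ = rΓ + ζᵢ(θᵢ)`; the static part (index `0`)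
carries mass `m0`, rail curve `z0` and parameter `t0`. -/
noncomputable def ballA {n : ℕ} (r d1 d2 d3 m0 t0 : ℝ) (Γ : Fin 3 → ℝ)
    (z0 : ℝ → Fin 3 → ℝ) (m : Fin n → ℝ) (z : Fin n → ℝ → Fin 3 → ℝ)
    (θ : Fin n → ℝ) : Matrix (Fin 3) (Fin 3) ℝ :=
  m0 • (hatM (r • Γ + z0 t0) * hatM (r • Γ + z0 t0))
    + (∑ i, m i • (hatM (r • Γ + z i (θ i)) * hatM (r • Γ + z i (θ i))))
    - inertiaM d1 d2 d3

/-- `κ = A⁻¹[Ω × 𝕀Ω + rΓ̃ × Γ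
      + Σ_{i=0}^n mᵢ sᵢ × (gΓ + Ω × (Ω × ζᵢ + 2θ̇ᵢζ′ᵢ) + θ̇ᵢ²ζ″ᵢ + uᵢζ′ᵢ)]`, the
angular-acceleration function of the rolling ball; `Γt` is `Γ̃`. -/
noncomputable def ballKappa {n : ℕ} (r g d1 d2 d3 m0 t0 td0 u0 : ℝ)
    (Γ Γt : Fin 3 → ℝ) (z0 : ℝ → Fin 3 → ℝ)
    (m : Fin n → ℝ) (z : Fin n → ℝ → Fin 3 → ℝ)
    (θ θd u : Fin n → ℝ) (Ω : Fin 3 → ℝ) : Fin 3 → ℝ :=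
  (ballA r d1 d2 d3 m0 t0 Γ z0 m z θ)⁻¹ *ᵥ
    (crossProduct Ω (inertiaM d1 d2 d3 *ᵥ Ω) + r • crossProduct Γt Γ
      + m0 • crossProduct (r • Γ + z0 t0)
          (g • Γ + crossProduct Ω (crossProduct Ω (z0 t0) + (2 * td0) • deriv z0 t0)
            + td0 ^ 2 • deriv (deriv z0) t0 + u0 • deriv z0 t0)
      + ∑ i, m i • crossProduct (r • Γ + z i (θ i))
          (g • Γ
            + crossProduct Ω (crossProduct Ω (z i (θ i)) + (2 * θd i) • deriv (z i) (θ i))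
            + θd i ^ 2 • deriv (deriv (z i)) (θ i) + u i • deriv (z i) (θ i)))

/-- `Sym(M) = (M + Mᵀ)/2`. -/
noncomputable def symM (M : Matrix (Fin 3) (Fin 3) ℝ) : Matrix (Fin 3) (Fin 3) ℝ :=
  (1 / 2 : ℝ) • (M + M.transpose)

attribute [local instance] Matrix.linftyOpNormedRing Matrix.linftyOpNormedAlgebra

noncomputable def hatCLM : (Fin 3 → ℝ) →L[ℝ] Matrix (Fin 3) (Fin 3) ℝ :=
  LinearMap.toContinuousLinearMap
    { toFun := hatM
      map_add' := by
        intro a b; ext i j; fin_cases i <;> fin_cases j <;>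
          (simp [hatM, Matrix.add_apply]; try ring)
      map_smul' := by
        intro c a; ext i j; fin_cases i <;> fin_cases j <;>
          (simp [hatM, Matrix.smul_apply]; try ring) }

lemma hatM_transpose (w : Fin 3 → ℝ) : (hatM w)ᵀ = -hatM w := by
  ext i j; fin_cases i <;> fin_cases j <;> simp [hatM]

lemma two_symM (a b : Fin 3 → ℝ) :
    (2 : ℝ) • symM (hatM a * hatM b) = hatM a * hatM b + hatM b * hatM a := by
  rw [symM, smul_smul]
  norm_num
  rw [hatM_transpose, hatM_transpose, neg_mul_neg]

lemma HasDerivAt.hatM' {f : ℝ → Fin 3 → ℝ} {f' : Fin 3 → ℝ} {x : ℝ}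
    (hf : HasDerivAt f f' x) :
    HasDerivAt (fun v => hatM (f v)) (hatM f') x :=
  hatCLM.hasFDerivAt.comp_hasDerivAt x hf

lemma HasDerivAt.entry {M : ℝ → Matrix (Fin 3) (Fin 3) ℝ} {M' : Matrix (Fin 3) (Fin 3) ℝ}
    {x : ℝ} (hM : HasDerivAt M M' x) (i k : Fin 3) :
    HasDerivAt (fun v => M v i k) (M' i k) x :=
  (LinearMap.toContinuousLinearMap
    { toFun := fun N : Matrix (Fin 3) (Fin 3) ℝ => N i k
      map_add' := fun _ _ => rfl
      map_smul' := by intro c N; rfl }).hasFDerivAt.comp_hasDerivAt x hM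

lemma HasDerivAt.mulVec' {M : ℝ → Matrix (Fin 3) (Fin 3) ℝ} {M' : Matrix (Fin 3) (Fin 3) ℝ}
    {b : ℝ → Fin 3 → ℝ} {b' : Fin 3 → ℝ} {x : ℝ}
    (hM : HasDerivAt M M' x) (hb : HasDerivAt b b' x) :
    HasDerivAt (fun v => M v *ᵥ b v) (M' *ᵥ b x + M x *ᵥ b') x := by
  rw [hasDerivAt_pi] at *
  intro i
  have key : (M' *ᵥ b x + M x *ᵥ b') i = ∑ k, (M' i k * b x k + M x i k * b' k) := by
    simp [Matrix.mulVec, dotProduct, Finset.sum_add_distrib]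
  have : ∀ v, (M v *ᵥ b v) i = ∑ k, M v i k * b v k := fun v => rfl
  simp only [this, key]
  exact HasDerivAt.fun_sum fun k _ => (hM.entry i k).mul (hb k)

lemma HasDerivAt.cross {f g : ℝ → Fin 3 → ℝ} {f' g' : Fin 3 → ℝ} {x : ℝ}
    (hf : HasDerivAt f f' x) (hg : HasDerivAt g g' x) :
    HasDerivAt (fun v => crossProduct (f v) (g v))
      (crossProduct f' (g x) + crossProduct (f x) g') x := by
  rw [hasDerivAt_pi] at *
  intro i
  fin_cases i
  · exact (((hf 1).mul (hg 2)).sub ((hf 2).mul (hg 1))).congr_deriv (by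
      simp [cross_apply]; ring)
  · exact (((hf 2).mul (hg 0)).sub ((hf 0).mul (hg 2))).congr_deriv (by
      simp [cross_apply]; ring)
  · exact (((hf 0).mul (hg 1)).sub ((hf 1).mul (hg 0))).congr_deriv (by
      simp [cross_apply]; ring)

lemma hasDerivAt_minv (M : ℝ → Matrix (Fin 3) (Fin 3) ℝ) (M' : Matrix (Fin 3) (Fin 3) ℝ)
    (x : ℝ) (hM : HasDerivAt M M' x) (h : IsUnit (M x)) :
    HasDerivAt (fun v => (M v)⁻¹) (-((M x)⁻¹ * M' * (M x)⁻¹)) x := by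
  have := (hasFDerivAt_ringInverse (𝕜 := ℝ) h.unit).comp_hasDerivAt x hM
  rw [Matrix.coe_units_inv, h.unit_spec] at this
  simp only [Function.comp_def, ContinuousLinearMap.neg_apply,
    ContinuousLinearMap.mulLeftRight_apply, Matrix.nonsing_inv_eq_ringInverse] at this ⊢
  exact this

lemma kappa_deriv (Afun : ℝ → Matrix (Fin 3) (Fin 3) ℝ) (bfun : ℝ → Fin 3 → ℝ)
    (A' : Matrix (Fin 3) (Fin 3) ℝ) (b' : Fin 3 → ℝ) (c : ℝ)
    (hA : HasDerivAt Afun A' c) (hb : HasDerivAt bfun b' c) (hu : IsUnit (Afun c)) :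
    HasDerivAt (fun v => (Afun v)⁻¹ *ᵥ bfun v)
      ((Afun c)⁻¹ *ᵥ (b' - A' *ᵥ ((Afun c)⁻¹ *ᵥ bfun c))) c := by
  have h := (hasDerivAt_minv Afun A' c hA hu).mulVec' hb
  convert h using 1
  rw [Matrix.mulVec_sub, Matrix.neg_mulVec, Matrix.mulVec_mulVec, Matrix.mulVec_mulVec]
  abel

/-- For each `1 ≤ j ≤ n`, assuming `A` is invertible at the point
considered, the partial derivative of `κ` with respect to `θ_j` equals
`A⁻¹ m_j [ζ′_j × {gΓ + Ω × (Ω × ζ_j + 2θ̇_jζ′_j) + θ̇_j²ζ″_j + u_jζ′_j}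
  + s_j × {Ω × (Ω × ζ′_j + 2θ̇_jζ″_j) + θ̇_j²ζ‴_j + u_jζ″_j}
  − 2 Sym(ŝ_j ζ̂′_j) κ]`. -/
theorem stmt16 {n : ℕ}
    (r g d1 d2 d3 m0 t0 td0 u0 : ℝ) (Γ Γt : Fin 3 → ℝ)
    (z0 : ℝ → Fin 3 → ℝ) (m : Fin n → ℝ) (z : Fin n → ℝ → Fin 3 → ℝ)
    (θ θd u : Fin n → ℝ) (Ω : Fin 3 → ℝ)
    (hz0 : ∀ x y, z0 x = z0 y) (htd0 : td0 = 0) (hu0 : u0 = 0)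
    (hz : ∀ i, ContDiff ℝ 3 (z i))
    (hA : IsUnit (ballA r d1 d2 d3 m0 t0 Γ z0 m z θ).det)
    (j : Fin n) :
    HasDerivAt
      (fun v : ℝ =>
        ballKappa r g d1 d2 d3 m0 t0 td0 u0 Γ Γt z0 m z (Function.update θ j v) θd u Ω)
      ((ballA r d1 d2 d3 m0 t0 Γ z0 m z θ)⁻¹ *ᵥ
        (m j •
          (crossProduct (deriv (z j) (θ j))
              (g • Γ
                + crossProduct Ω (crossProduct Ω (z j (θ j)) + (2 * θd j) • deriv (z j) (θ j))
                + θd j ^ 2 • deriv (deriv (z j)) (θ j) + u j • deriv (z j) (θ j))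
            + crossProduct (r • Γ + z j (θ j))
                (crossProduct Ω
                    (crossProduct Ω (deriv (z j) (θ j))
                      + (2 * θd j) • deriv (deriv (z j)) (θ j))
                  + θd j ^ 2 • deriv (deriv (deriv (z j))) (θ j)
                  + u j • deriv (deriv (z j)) (θ j))
            - ((2 : ℝ) • symM (hatM (r • Γ + z j (θ j)) * hatM (deriv (z j) (θ j)))) *ᵥ
                ballKappa r g d1 d2 d3 m0 t0 td0 u0 Γ Γt z0 m z θ θd u Ω)))
      (θ j) := by
  classical
  obtain ⟨hD1, hD2, hD0⟩ : Differentiable ℝ (deriv (z j)) ∧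
      Differentiable ℝ (deriv (deriv (z j))) ∧ Differentiable ℝ (z j) := by
    have h3 : ContDiff ℝ (2 + 1 : ℕ) (z j) := by exact_mod_cast hz j
    have h2 : ContDiff ℝ (2 : ℕ) (deriv (z j)) := (contDiff_succ_iff_deriv.mp h3).2.2
    have h1 : ContDiff ℝ ((1 : ℕ) + 1) (deriv (z j)) := by exact_mod_cast h2
    have h1' : ContDiff ℝ (1 : ℕ) (deriv (deriv (z j))) := (contDiff_succ_iff_deriv.mp h1).2.2
    exact ⟨h2.differentiable (by norm_num), h1'.differentiable (by norm_num),
      h3.differentiable (by norm_num)⟩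
  have hZ0 : HasDerivAt (z j) (deriv (z j) (θ j)) (θ j) := (hD0 (θ j)).hasDerivAt
  have hZ1 : HasDerivAt (deriv (z j)) (deriv (deriv (z j)) (θ j)) (θ j) := (hD1 (θ j)).hasDerivAt
  have hZ2 : HasDerivAt (deriv (deriv (z j))) (deriv (deriv (deriv (z j))) (θ j)) (θ j) :=
    (hD2 (θ j)).hasDerivAt
  have hs : HasDerivAt (fun v => r • Γ + z j v) (deriv (z j) (θ j)) (θ j) :=
    hZ0.const_add (r • Γ)
  -- derivative of the A-function
  have hAfun : HasDerivAt
      (fun v => ballA r d1 d2 d3 m0 t0 Γ z0 m z (Function.update θ j v))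
      (m j • (hatM (deriv (z j) (θ j)) * hatM (r • Γ + z j (θ j))
        + hatM (r • Γ + z j (θ j)) * hatM (deriv (z j) (θ j)))) (θ j) := by
    have hterm : ∀ i : Fin n,
        HasDerivAt (fun v => m i • (hatM (r • Γ + z i (Function.update θ j v i)) *
            hatM (r • Γ + z i (Function.update θ j v i))))
          (if i = j then m j • (hatM (deriv (z j) (θ j)) * hatM (r • Γ + z j (θ j))
            + hatM (r • Γ + z j (θ j)) * hatM (deriv (z j) (θ j))) else 0) (θ j) := by
      intro i
      rcases eq_or_ne i j with rfl | hij
      · simp only [Function.update_self, if_pos rfl]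
        exact (hs.hatM'.mul hs.hatM').const_smul (m i)
      · simp only [Function.update_of_ne hij, if_neg hij]
        exact hasDerivAt_const (θ j) _
    have hsum := HasDerivAt.fun_sum (fun i (_ : i ∈ Finset.univ) => hterm i)
    have htot := ((hsum.const_add
        (m0 • (hatM (r • Γ + z0 t0) * hatM (r • Γ + z0 t0)))).sub
      (hasDerivAt_const (θ j) (inertiaM d1 d2 d3)))
    unfold ballA
    refine htot.congr_deriv (Eq.symm ?_)
    simp [Finset.sum_ite_eq']
  -- derivative of the bracket function (the `w` part first)
  have hin : HasDerivAt
      (fun v => crossProduct Ω (z j v) + (2 * θd j) • deriv (z j) v)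
      (crossProduct Ω (deriv (z j) (θ j)) + (2 * θd j) • deriv (deriv (z j)) (θ j)) (θ j) := by
    have h1 := (hasDerivAt_const (θ j) Ω).cross hZ0
    have h2 := hZ1.const_smul (2 * θd j)
    refine (h1.add h2).congr_deriv (Eq.symm ?_)
    funext i; fin_cases i <;> (simp [cross_apply]; try ring)
  have houter : HasDerivAt
      (fun v => crossProduct Ω (crossProduct Ω (z j v) + (2 * θd j) • deriv (z j) v))
      (crossProduct Ω (crossProduct Ω (deriv (z j) (θ j))
        + (2 * θd j) • deriv (deriv (z j)) (θ j))) (θ j) := by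
    refine ((hasDerivAt_const (θ j) Ω).cross hin).congr_deriv (Eq.symm ?_)
    funext i; fin_cases i <;> (simp [cross_apply]; try ring)
  have hW : HasDerivAt
      (fun v => g • Γ + crossProduct Ω (crossProduct Ω (z j v) + (2 * θd j) • deriv (z j) v)
        + θd j ^ 2 • deriv (deriv (z j)) v + u j • deriv (z j) v)
      (crossProduct Ω (crossProduct Ω (deriv (z j) (θ j))
          + (2 * θd j) • deriv (deriv (z j)) (θ j))
        + θd j ^ 2 • deriv (deriv (deriv (z j))) (θ j)
        + u j • deriv (deriv (z j)) (θ j)) (θ j) := by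
    have := ((houter.const_add (g • Γ)).add (hZ2.const_smul (θd j ^ 2))).add
      (hZ1.const_smul (u j))
    exact this
  have hbfun : HasDerivAt
      (fun v => crossProduct Ω (inertiaM d1 d2 d3 *ᵥ Ω) + r • crossProduct Γt Γ
        + m0 • crossProduct (r • Γ + z0 t0)
            (g • Γ + crossProduct Ω (crossProduct Ω (z0 t0) + (2 * td0) • deriv z0 t0)
              + td0 ^ 2 • deriv (deriv z0) t0 + u0 • deriv z0 t0)
        + ∑ i, m i • crossProduct (r • Γ + z i (Function.update θ j v i))
            (g • Γ
              + crossProduct Ω (crossProduct Ω (z i (Function.update θ j v i))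
                  + (2 * θd i) • deriv (z i) (Function.update θ j v i))
              + θd i ^ 2 • deriv (deriv (z i)) (Function.update θ j v i)
              + u i • deriv (z i) (Function.update θ j v i)))
      (m j • (crossProduct (deriv (z j) (θ j))
          (g • Γ
            + crossProduct Ω (crossProduct Ω (z j (θ j)) + (2 * θd j) • deriv (z j) (θ j))
            + θd j ^ 2 • deriv (deriv (z j)) (θ j) + u j • deriv (z j) (θ j))
        + crossProduct (r • Γ + z j (θ j))
            (crossProduct Ω (crossProduct Ω (deriv (z j) (θ j))
                + (2 * θd j) • deriv (deriv (z j)) (θ j))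
              + θd j ^ 2 • deriv (deriv (deriv (z j))) (θ j)
              + u j • deriv (deriv (z j)) (θ j)))) (θ j) := by
    have hterm : ∀ i : Fin n,
        HasDerivAt (fun v => m i • crossProduct (r • Γ + z i (Function.update θ j v i))
            (g • Γ
              + crossProduct Ω (crossProduct Ω (z i (Function.update θ j v i))
                  + (2 * θd i) • deriv (z i) (Function.update θ j v i))
              + θd i ^ 2 • deriv (deriv (z i)) (Function.update θ j v i)
              + u i • deriv (z i) (Function.update θ j v i)))
          (if i = j then m j • (crossProduct (deriv (z j) (θ j))
              (g • Γ
                + crossProduct Ω (crossProduct Ω (z j (θ j)) + (2 * θd j) • deriv (z j) (θ j))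
                + θd j ^ 2 • deriv (deriv (z j)) (θ j) + u j • deriv (z j) (θ j))
            + crossProduct (r • Γ + z j (θ j))
                (crossProduct Ω (crossProduct Ω (deriv (z j) (θ j))
                    + (2 * θd j) • deriv (deriv (z j)) (θ j))
                  + θd j ^ 2 • deriv (deriv (deriv (z j))) (θ j)
                  + u j • deriv (deriv (z j)) (θ j))) else 0) (θ j) := by
      intro i
      rcases eq_or_ne i j with rfl | hij
      · simp only [Function.update_self, if_pos rfl]
        exact (hs.cross hW).const_smul (m i)
      · simp only [Function.update_of_ne hij, if_neg hij]
        exact hasDerivAt_const (θ j) _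
    have hsum := HasDerivAt.fun_sum (fun i (_ : i ∈ Finset.univ) => hterm i)
    have htot := hsum.const_add (crossProduct Ω (inertiaM d1 d2 d3 *ᵥ Ω) + r • crossProduct Γt Γ
        + m0 • crossProduct (r • Γ + z0 t0)
            (g • Γ + crossProduct Ω (crossProduct Ω (z0 t0) + (2 * td0) • deriv z0 t0)
              + td0 ^ 2 • deriv (deriv z0) t0 + u0 • deriv z0 t0))
    refine htot.congr_deriv (Eq.symm ?_)
    simp [Finset.sum_ite_eq']
  -- invertibility at the point
  have hu : IsUnit (ballA r d1 d2 d3 m0 t0 Γ z0 m z (Function.update θ j (θ j))) := by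
    rw [Function.update_eq_self]
    exact (Matrix.isUnit_iff_isUnit_det _).mpr hA
  have hfin := kappa_deriv _ _ _ _ (θ j) hAfun hbfun hu
  refine hfin.congr_deriv (Eq.symm ?_)
  rw [Function.update_eq_self]
  unfold ballKappa
  rw [two_symM, smul_sub, Matrix.smul_mulVec,
    add_comm (hatM (r • Γ + z j (θ j)) * hatM (deriv (z j) (θ j)))
      (hatM (deriv (z j) (θ j)) * hatM (r • Γ + z j (θ j)))]
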